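/- Variable exponent Lebesgue spaces are not translation invariant: if p : ℝ^N → ℝ is continuous, nonconstant, and satisfies 1 < inf p ≤ sup p < ∞, then there exist a measurable function u : ℝ^N → ℝ and a vector h ∈ ℝ^N such that ∫_{ℝ^N} |u(x)|^{p(x)} dx < ∞ while ∫_{ℝ^N} |u(x + h)|^{p(x)} dx = ∞. -/

import Mathlib

open MeasureTheory Set
open scoped ENNReal NNReal

private lemma shell_exists {r : ℝ} (h0 : 0 < r) (h1 : r < 1) :
    ∃ k : ℕ, (2:ℝ) ^ (-(k:ℤ)-1) ≤ r ∧ r < (2:ℝ) ^ (-(k:ℤ)) := by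
  obtain ⟨n, hn1, hn2⟩ := exists_mem_Ico_zpow h0 one_lt_two
  have hn : n + 1 ≤ 0 := by
    by_contra hc
    push_neg at hc
    have h2 : (1:ℝ) ≤ 2 ^ n := one_le_zpow₀ one_le_two (by omega)
    linarith
  refine ⟨(-(n+1)).toNat, ?_, ?_⟩
  · have he : -(((-(n+1)).toNat : ℤ)) - 1 = n := by omega
    rw [he]; exact hn1
  · have he : -(((-(n+1)).toNat : ℤ)) = n + 1 := by omega
    rw [he]; exact hn2

private lemma key {N : ℕ} [NeZero N] (p : (Fin N → ℝ) → ℝ) (hpc : Continuous p)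
    {m : ℝ} (hm : 1 < m) (hlb : ∀ x, m ≤ p x)
    (A B : Fin N → ℝ) (hAB : p A < p B) :
    ∃ u : (Fin N → ℝ) → ℝ, ∃ h : Fin N → ℝ, Measurable u ∧
      (∫⁻ x, ENNReal.ofReal (|u x| ^ p x)) < ⊤ ∧
      (∫⁻ x, ENNReal.ofReal (|u (x + h)| ^ p x)) = ⊤ := by
  set s : ℝ := (2 * p A + p B) / 3 with hs_def
  set t : ℝ := (p A + 2 * p B) / 3 with ht_def
  have hmA : 1 < p A := lt_of_lt_of_le hm (hlb A)
  have hAs : p A < s := by simp only [hs_def]; linarith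
  have hst : s < t := by simp only [hs_def, ht_def]; linarith
  have htB : t < p B := by simp only [ht_def]; linarith
  have hs1 : 1 < s := lt_trans hmA hAs
  have ht1 : 1 < t := lt_trans hs1 hst
  have ht0 : 0 < t := by linarith
  have hs0 : 0 < s := by linarith
  -- continuity gives balls
  obtain ⟨δA, hδA0, hδA⟩ := Metric.continuousAt_iff.mp hpc.continuousAt (s - p A) (by linarith)
  obtain ⟨δB, hδB0, hδB⟩ := Metric.continuousAt_iff.mp hpc.continuousAt (p B - t) (by linarith)
  set δ : ℝ := min 1 (min δA δB) with hδ_def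
  have hδ0 : 0 < δ := lt_min one_pos (lt_min hδA0 hδB0)
  have hδ1 : δ ≤ 1 := min_le_left _ _
  have hδa : δ ≤ δA := le_trans (min_le_right _ _) (min_le_left _ _)
  have hδb : δ ≤ δB := le_trans (min_le_right _ _) (min_le_right _ _)
  set boxA : Set (Fin N → ℝ) := Set.pi univ (fun i => Ioo (A i) (A i + δ)) with hboxA_def
  set boxB : Set (Fin N → ℝ) := Set.pi univ (fun i => Ioo (B i) (B i + δ)) with hboxB_def
  have hboxA : ∀ x ∈ boxA, p x < s := by
    intro x hx
    have hd : dist x A < δA := by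
      refine lt_of_lt_of_le ((dist_pi_lt_iff hδ0).mpr fun i => ?_) hδa
      have hxi := hx i (mem_univ i)
      rw [Real.dist_eq, abs_lt]
      exact ⟨by linarith [hxi.1], by linarith [hxi.2]⟩
    have := hδA hd
    rw [Real.dist_eq, abs_lt] at this
    linarith [this.2]
  have hboxB : ∀ x ∈ boxB, t < p x := by
    intro x hx
    have hd : dist x B < δB := by
      refine lt_of_lt_of_le ((dist_pi_lt_iff hδ0).mpr fun i => ?_) hδb
      have hxi := hx i (mem_univ i)
      rw [Real.dist_eq, abs_lt]
      exact ⟨by linarith [hxi.1], by linarith [hxi.2]⟩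
    have := hδB hd
    rw [Real.dist_eq, abs_lt] at this
    linarith [this.1]
  -- the function and translation
  set u : (Fin N → ℝ) → ℝ :=
    boxA.indicator (fun x => Real.exp (Real.log (x 0 - A 0) * (-t⁻¹))) with hu_def
  set h : Fin N → ℝ := A - B with hh_def
  have hboxA_meas : MeasurableSet boxA := MeasurableSet.univ_pi fun i => measurableSet_Ioo
  have hu_meas : Measurable u := by
    apply Measurable.indicator _ hboxA_meas
    exact Real.measurable_exp.comp
      ((Real.measurable_log.comp ((measurable_pi_apply 0).sub measurable_const)).mul
        measurable_const)
  -- value of the modular integrand on boxA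
  have hval : ∀ y ∈ boxA, ∀ e : ℝ, |u y| ^ e = (y 0 - A 0) ^ (-t⁻¹ * e) := by
    intro y hy e
    have hr : 0 < y 0 - A 0 := by
      have := hy 0 (mem_univ 0); linarith [this.1]
    have h1 : u y = (y 0 - A 0) ^ (-t⁻¹) := by
      rw [hu_def, indicator_of_mem hy, Real.rpow_def_of_pos hr]
    rw [h1, abs_of_pos (Real.rpow_pos_of_pos hr _), ← Real.rpow_mul hr.le]
  have hmemA : ∀ x, x + h ∈ boxA ↔ x ∈ boxB := by
    intro x
    constructor
    · intro hx i _
      have := hx i (mem_univ i)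
      simp only [hh_def, Pi.add_apply, Pi.sub_apply] at this
      exact ⟨by linarith [this.1], by linarith [this.2]⟩
    · intro hx i _
      have := hx i (mem_univ i)
      simp only [hh_def, Pi.add_apply, Pi.sub_apply]
      exact ⟨by linarith [this.1], by linarith [this.2]⟩
  refine ⟨u, h, hu_meas, ?_, ?_⟩
  · -- FINITE PART
    set S : ℕ → Set (Fin N → ℝ) := fun k => Set.pi univ (fun i =>
      if i = 0 then Ico (A 0 + (2:ℝ) ^ (-(k:ℤ)-1)) (A 0 + (2:ℝ) ^ (-(k:ℤ)))
      else Ioo (A i) (A i + δ)) with hS_def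
    set c : ℕ → ℝ≥0∞ := fun k => ENNReal.ofReal (((2:ℝ) ^ (-(k:ℤ)-1)) ^ (-(s/t))) with hc_def
    have hS_meas : ∀ k, MeasurableSet (S k) := by
      intro k
      refine MeasurableSet.univ_pi fun i => ?_
      split_ifs
      exacts [measurableSet_Ico, measurableSet_Ioo]
    have hpt : ∀ x, ENNReal.ofReal (|u x| ^ p x) ≤ ∑' k, (S k).indicator (fun _ => c k) x := by
      intro x
      by_cases hx : x ∈ boxA
      · have hx0 := hx 0 (mem_univ 0)
        have hr0 : 0 < x 0 - A 0 := by linarith [hx0.1]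
        have hr1 : x 0 - A 0 < 1 := by linarith [hx0.2, hδ1]
        obtain ⟨k, hk1, hk2⟩ := shell_exists hr0 hr1
        have hmem : x ∈ S k := by
          intro i _
          by_cases hi : i = 0
          · subst hi
            simp only [eq_self_iff_true, if_true]
            exact ⟨by linarith, by linarith⟩
          · simp only [hi, if_false]
            exact hx i (mem_univ i)
        refine le_trans ?_ (ENNReal.le_tsum k)
        rw [indicator_of_mem hmem, hval x hx (p x)]
        apply ENNReal.ofReal_le_ofReal
        have hps : p x ≤ s := (hboxA x hx).le
        have e1 : (x 0 - A 0) ^ (-t⁻¹ * p x) ≤ (x 0 - A 0) ^ (-(s/t)) := by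
          apply Real.rpow_le_rpow_of_exponent_ge hr0 hr1.le
          have h2 : p x / t ≤ s / t := by gcongr
          have h3 : -t⁻¹ * p x = -(p x / t) := by ring
          rw [h3]; linarith
        have e2 : (x 0 - A 0) ^ (-(s/t)) ≤ ((2:ℝ) ^ (-(k:ℤ)-1)) ^ (-(s/t)) :=
          Real.rpow_le_rpow_of_nonpos (zpow_pos two_pos _) hk1
            (by rw [neg_nonpos]; positivity)
        exact le_trans e1 e2
      · have hz : u x = 0 := indicator_of_notMem hx _
        rw [hz, abs_zero, Real.zero_rpow (by nlinarith [hlb x] : p x ≠ 0)]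
        simp
    have hbound : (∫⁻ x, ENNReal.ofReal (|u x| ^ p x)) ≤ ∑' k, c k * volume (S k) := by
      calc (∫⁻ x, ENNReal.ofReal (|u x| ^ p x))
          ≤ ∫⁻ x, ∑' k, (S k).indicator (fun _ => c k) x := lintegral_mono hpt
        _ = ∑' k, ∫⁻ x, (S k).indicator (fun _ => c k) x :=
            lintegral_tsum fun k => (measurable_const.indicator (hS_meas k)).aemeasurable
        _ = ∑' k, c k * volume (S k) := by
            refine tsum_congr fun k => ?_
            rw [lintegral_indicator_const (hS_meas k)]
    have hvol : ∀ k, volume (S k) ≤ ENNReal.ofReal ((2:ℝ) ^ (-(k:ℤ)-1)) := by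
      intro k
      have h1 : volume (S k) = ∏ i, volume (if i = 0 then
          Ico (A 0 + (2:ℝ) ^ (-(k:ℤ)-1)) (A 0 + (2:ℝ) ^ (-(k:ℤ)))
          else Ioo (A i) (A i + δ)) := volume_pi_pi _
      rw [h1, ← Finset.mul_prod_erase Finset.univ _ (Finset.mem_univ (0 : Fin N)), if_pos rfl]
      have h2 : (∏ i ∈ Finset.univ.erase (0 : Fin N), volume (if i = 0 then
          Ico (A 0 + (2:ℝ) ^ (-(k:ℤ)-1)) (A 0 + (2:ℝ) ^ (-(k:ℤ)))
          else Ioo (A i) (A i + δ))) ≤ 1 := by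
        refine Finset.prod_le_one (fun i _ => zero_le) (fun i hi => ?_)
        rw [if_neg (Finset.ne_of_mem_erase hi), Real.volume_Ioo]
        rw [show A i + δ - A i = δ by ring]
        exact ENNReal.ofReal_le_one.mpr hδ1
      calc volume (Ico (A 0 + (2:ℝ) ^ (-(k:ℤ)-1)) (A 0 + (2:ℝ) ^ (-(k:ℤ)))) *
            ∏ i ∈ Finset.univ.erase (0 : Fin N), volume (if i = 0 then
            Ico (A 0 + (2:ℝ) ^ (-(k:ℤ)-1)) (A 0 + (2:ℝ) ^ (-(k:ℤ)))
            else Ioo (A i) (A i + δ))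
          ≤ volume (Ico (A 0 + (2:ℝ) ^ (-(k:ℤ)-1)) (A 0 + (2:ℝ) ^ (-(k:ℤ)))) * 1 :=
            mul_le_mul_right h2 _
        _ = ENNReal.ofReal ((2:ℝ) ^ (-(k:ℤ)-1)) := by
            rw [mul_one, Real.volume_Ico]
            congr 1
            have hz : (2:ℝ) ^ (-(k:ℤ)) = 2 ^ (-(k:ℤ)-1) * 2 := by
              rw [← zpow_add_one₀ (two_ne_zero : (2:ℝ) ≠ 0)]; congr 1; ring
            rw [hz]; ring
    set q : ℝ := (2:ℝ) ^ (s/t - 1) with hq_def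
    have hq1 : q < 1 := Real.rpow_lt_one_of_one_lt_of_neg one_lt_two
      (by rw [sub_neg]; exact (div_lt_one ht0).mpr hst)
    have hq0 : 0 ≤ q := Real.rpow_nonneg (by norm_num) _
    have hterm : ∀ k, c k * ENNReal.ofReal ((2:ℝ) ^ (-(k:ℤ)-1)) = ENNReal.ofReal q ^ (k+1) := by
      intro k
      rw [hc_def, ← ENNReal.ofReal_mul (by positivity), ← ENNReal.ofReal_pow hq0]
      congr 1
      have hzp : ((2:ℝ) ^ (-(k:ℤ)-1)) = (2:ℝ) ^ (((-(k:ℤ)-1 : ℤ) : ℝ)) :=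
        (Real.rpow_intCast 2 _).symm
      rw [hzp, ← Real.rpow_natCast q (k+1), hq_def,
        ← Real.rpow_mul (by norm_num : (0:ℝ) ≤ 2),
        ← Real.rpow_mul (by norm_num : (0:ℝ) ≤ 2),
        ← Real.rpow_add two_pos]
      congr 1
      push_cast
      ring
    have hfin : (∑' k : ℕ, ENNReal.ofReal q ^ (k+1)) < ⊤ := by
      rw [ENNReal.tsum_geometric_add_one]
      refine ENNReal.mul_lt_top ENNReal.ofReal_lt_top ?_
      exact ENNReal.inv_lt_top.mpr (tsub_pos_of_lt (ENNReal.ofReal_lt_one.mpr hq1))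
    refine lt_of_le_of_lt (hbound.trans (ENNReal.tsum_le_tsum fun k => ?_)) hfin
    calc c k * volume (S k) ≤ c k * ENNReal.ofReal ((2:ℝ) ^ (-(k:ℤ)-1)) :=
          mul_le_mul_right (hvol k) _
      _ = ENNReal.ofReal q ^ (k+1) := hterm k
  · -- DIVERGENT PART
    set T : ℕ → Set (Fin N → ℝ) := fun k => Set.pi univ (fun i =>
      if i = 0 then Ico (B 0 + δ * (2:ℝ) ^ (-(k:ℤ)-1)) (B 0 + δ * (2:ℝ) ^ (-(k:ℤ)))
      else Ioo (B i) (B i + δ)) with hT_def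
    set d : ℕ → ℝ≥0∞ := fun k => ENNReal.ofReal ((δ * (2:ℝ) ^ (-(k:ℤ)))⁻¹) with hd_def
    have hzp1 : ∀ k : ℕ, (2:ℝ) ^ (-(k:ℤ)) ≤ 1 := fun k =>
      zpow_le_one_of_nonpos₀ one_le_two (by omega)
    have hT_meas : ∀ k, MeasurableSet (T k) := by
      intro k
      refine MeasurableSet.univ_pi fun i => ?_
      split_ifs
      exacts [measurableSet_Ico, measurableSet_Ioo]
    have hT_subB : ∀ k, T k ⊆ boxB := by
      intro k x hx i _
      have hxi := hx i (mem_univ i)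
      by_cases hi : i = 0
      · subst hi
        simp only [eq_self_iff_true, if_true] at hxi
        have l1 : 0 < δ * (2:ℝ) ^ (-(k:ℤ)-1) := by positivity
        have l2 : δ * (2:ℝ) ^ (-(k:ℤ)) ≤ δ := by nlinarith [hzp1 k]
        exact ⟨by linarith [hxi.1], by linarith [hxi.2]⟩
      · simp only [hi, if_false] at hxi
        exact hxi
    have step : ∀ j k : ℕ, δ * (2:ℝ) ^ (-(j:ℤ)-1) < δ * (2:ℝ) ^ (-(k:ℤ)) → k ≤ j := by
      intro j k hjk
      have h1 := (mul_lt_mul_iff_right₀ hδ0).mp hjk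
      have h2 := (zpow_lt_zpow_iff_right₀ one_lt_two).mp h1
      omega
    have hT_disj : ∀ j k : ℕ, ∀ x, x ∈ T j → x ∈ T k → j = k := by
      intro j k x hj hk
      have h1 := hj 0 (mem_univ 0); simp only [eq_self_iff_true, if_true] at h1
      have h2 := hk 0 (mem_univ 0); simp only [eq_self_iff_true, if_true] at h2
      have l1 : k ≤ j := step j k (by linarith [h1.1, h2.2])
      have l2 : j ≤ k := step k j (by linarith [h2.1, h1.2])
      omega
    have hpt2 : ∀ x, (∑' k, (T k).indicator (fun _ => d k) x) ≤
        ENNReal.ofReal (|u (x + h)| ^ p x) := by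
      intro x
      by_cases hx : ∃ k, x ∈ T k
      · obtain ⟨k, hk⟩ := hx
        have htsum : (∑' j, (T j).indicator (fun _ => d j) x) = d k := by
          rw [tsum_eq_single k]
          · exact indicator_of_mem hk _
          · intro j hj
            exact indicator_of_notMem (fun hj' => hj (hT_disj j k x hj' hk)) _
        rw [htsum]
        have hxB : x ∈ boxB := hT_subB k hk
        have hxA : x + h ∈ boxA := (hmemA x).mpr hxB
        have hr_eq : (x + h) 0 - A 0 = x 0 - B 0 := by
          simp only [hh_def, Pi.add_apply, Pi.sub_apply]; ring
        have hk0 := hk 0 (mem_univ 0); simp only [eq_self_iff_true, if_true] at hk0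
        have hl1 : 0 < δ * (2:ℝ) ^ (-(k:ℤ)-1) := by positivity
        have hr0 : 0 < x 0 - B 0 := by linarith [hk0.1]
        have hrk : x 0 - B 0 < δ * (2:ℝ) ^ (-(k:ℤ)) := by linarith [hk0.2]
        have hr1 : x 0 - B 0 ≤ 1 := by nlinarith [hzp1 k]
        rw [hval (x + h) hxA (p x), hr_eq]
        apply ENNReal.ofReal_le_ofReal
        have e1 : (x 0 - B 0) ^ ((-1 : ℝ)) ≤ (x 0 - B 0) ^ (-t⁻¹ * p x) := by
          apply Real.rpow_le_rpow_of_exponent_ge hr0 hr1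
          have h2 : t ≤ p x := (hboxB x hxB).le
          have h3 : 1 ≤ p x / t := (one_le_div ht0).mpr h2
          have h4 : -t⁻¹ * p x = -(p x / t) := by ring
          rw [h4]; linarith
        refine le_trans ?_ e1
        rw [Real.rpow_neg_one]
        exact inv_anti₀ hr0 hrk.le
      · push_neg at hx
        have hz : ∀ j, (T j).indicator (fun _ => d j) x = 0 := fun j =>
          indicator_of_notMem (hx j) _
        rw [tsum_congr hz, tsum_zero]
        exact zero_le
    have hvolT : ∀ k, volume (T k) = ENNReal.ofReal (δ * (2:ℝ) ^ (-(k:ℤ)-1)) *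
        ∏ _i ∈ Finset.univ.erase (0 : Fin N), ENNReal.ofReal δ := by
      intro k
      have h1 : volume (T k) = ∏ i, volume (if i = 0 then
          Ico (B 0 + δ * (2:ℝ) ^ (-(k:ℤ)-1)) (B 0 + δ * (2:ℝ) ^ (-(k:ℤ)))
          else Ioo (B i) (B i + δ)) := volume_pi_pi _
      rw [h1, ← Finset.mul_prod_erase Finset.univ _ (Finset.mem_univ (0 : Fin N)), if_pos rfl]
      congr 1
      · rw [Real.volume_Ico]
        congr 1
        have hz : (2:ℝ) ^ (-(k:ℤ)) = 2 ^ (-(k:ℤ)-1) * 2 := by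
          rw [← zpow_add_one₀ (two_ne_zero : (2:ℝ) ≠ 0)]; congr 1; ring
        rw [hz]; ring
      · refine Finset.prod_congr rfl fun i hi => ?_
        rw [if_neg (Finset.ne_of_mem_erase hi), Real.volume_Ioo,
          show B i + δ - B i = δ by ring]
    have hterm2 : ∀ k, d k * volume (T k) = ENNReal.ofReal 2⁻¹ *
        ∏ _i ∈ Finset.univ.erase (0 : Fin N), ENNReal.ofReal δ := by
      intro k
      rw [hvolT k, ← mul_assoc, hd_def, ← ENNReal.ofReal_mul (by positivity)]
      congr 2
      have hz : (2:ℝ) ^ (-(k:ℤ)) = 2 ^ (-(k:ℤ)-1) * 2 := by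
        rw [← zpow_add_one₀ (two_ne_zero : (2:ℝ) ≠ 0)]; congr 1; ring
      have hne : (2:ℝ) ^ (-(k:ℤ)-1) ≠ 0 := ne_of_gt (zpow_pos two_pos _)
      rw [hz]
      field_simp
    have hsum : (∑' k : ℕ, d k * volume (T k)) = ⊤ := by
      rw [tsum_congr hterm2]
      refine ENNReal.tsum_const_eq_top_of_ne_zero (mul_ne_zero ?_ ?_)
      · exact (ENNReal.ofReal_pos.mpr (by norm_num)).ne'
      · exact (CanonicallyOrderedAdd.prod_pos.mpr
          fun i _ => ENNReal.ofReal_pos.mpr hδ0).ne'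
    refine top_unique ?_
    calc (⊤ : ℝ≥0∞) = ∑' k : ℕ, d k * volume (T k) := hsum.symm
      _ = ∑' k : ℕ, ∫⁻ x, (T k).indicator (fun _ => d k) x := by
          refine tsum_congr fun k => ?_
          rw [lintegral_indicator_const (hT_meas k)]
      _ = ∫⁻ x, ∑' k, (T k).indicator (fun _ => d k) x :=
          (lintegral_tsum fun k => (measurable_const.indicator (hT_meas k)).aemeasurable).symm
      _ ≤ ∫⁻ x, ENNReal.ofReal (|u (x + h)| ^ p x) := lintegral_mono hpt2

/-- Variable exponent Lebesgue spaces are not translation invariant. -/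
theorem variable_exponent_not_translation_invariant {N : ℕ}
    (p : (Fin N → ℝ) → ℝ) (hpc : Continuous p)
    (hpnc : ∃ x y : Fin N → ℝ, p x ≠ p y)
    (m M : ℝ) (hm : 1 < m) (hpb : ∀ x, m ≤ p x ∧ p x ≤ M) :
    ∃ u : (Fin N → ℝ) → ℝ, ∃ h : Fin N → ℝ, Measurable u ∧
      (∫⁻ x, ENNReal.ofReal (|u x| ^ p x)) < ⊤ ∧
      (∫⁻ x, ENNReal.ofReal (|u (x + h)| ^ p x)) = ⊤ := by
  obtain ⟨x, y, hxy⟩ := hpnc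
  rcases Nat.eq_zero_or_pos N with hN | hN
  · subst hN
    exact absurd (congrArg p (Subsingleton.elim x y)) hxy
  · haveI : NeZero N := ⟨hN.ne'⟩
    rcases lt_or_gt_of_ne hxy with hlt | hlt
    · exact key p hpc hm (fun z => (hpb z).1) x y hlt
    · exact key p hpc hm (fun z => (hpb z).1) y x hlt
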